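/- Let (K, δ) be a differential field of characteristic zero and let A be the ℚ-span of the logarithmic derivatives of K. Let (E, δ_E) be a differential extension and suppose a₁, ..., a_r ∈ K are elements of a subgroup A' ⊆ K with A' ∩ A = 0, and s₁, ..., s_r ∈ E \ {0} satisfy δ_E(sᵢ) = aᵢ·sᵢ. If the aᵢ are pairwise distinct, then s₁, ..., s_r are linearly independent over K. -/

import Mathlib

/-- Let `A` be the `ℚ`-span of the logarithmic derivatives of `K` and let `A'` be an
additive subgroup of `K` with `A' ∩ A = 0`. If `a₁, …, a_r ∈ A'` are pairwise distinct and
`s₁, …, s_r ∈ E \ {0}` satisfy `δ_E(sᵢ) = aᵢ sᵢ`, then `s₁, …, s_r` are linearly independent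
over `K`. -/
theorem stmt9 {K E : Type*} [Field K] [CharZero K] [Field E] [Algebra K E]
    (δ : K → K)
    (hadd : ∀ a b : K, δ (a + b) = δ a + δ b)
    (hmul : ∀ a b : K, δ (a * b) = δ a * b + a * δ b)
    (δE : E → E)
    (hEadd : ∀ x y : E, δE (x + y) = δE x + δE y)
    (hEmul : ∀ x y : E, δE (x * y) = δE x * y + x * δE y)
    (hcomp : ∀ a : K, δE (algebraMap K E a) = algebraMap K E (δ a))
    (A' : AddSubgroup K)
    (hA' : ∀ x ∈ A',
      x ∈ Submodule.span ℚ {c : K | ∃ b : K, b ≠ 0 ∧ c = δ b / b} → x = 0)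
    {r : ℕ} (a : Fin r → K) (haA' : ∀ i, a i ∈ A') (hinj : Function.Injective a)
    (s : Fin r → E) (hs0 : ∀ i, s i ≠ 0)
    (hseq : ∀ i, δE (s i) = algebraMap K E (a i) * s i) :
    LinearIndependent K s := by
  classical
  have hδ0 : δ 0 = 0 := by
    have := hadd 0 0; simpa using this.symm
  have hδ1 : δ 1 = 0 := by
    have := hmul 1 1
    simp only [mul_one, one_mul] at this
    linear_combination -this
  have hδE0 : δE 0 = 0 := by
    have := hEadd 0 0; simpa using this.symm
  have hδEsum : ∀ (f : Fin r → E), δE (∑ i, f i) = ∑ i, δE (f i) := by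
    intro f
    exact map_sum (AddMonoidHom.mk' δE hEadd) f Finset.univ
  -- key claim by strong induction on support size
  have key : ∀ n : ℕ, ∀ g : Fin r → K,
      (Finset.univ.filter (fun i => g i ≠ 0)).card ≤ n →
      (∑ i, g i • s i) = 0 → ∀ i, g i = 0 := by
    intro n
    induction n with
    | zero =>
      intro g hcard _ i
      by_contra hgi
      have : i ∈ Finset.univ.filter (fun i => g i ≠ 0) := by
        simp [hgi]
      have := Finset.card_pos.mpr ⟨i, this⟩
      omega
    | succ n ih =>
      intro g hcard hsum i
      by_contra hgi
      -- there is some i₀ in support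
      set T := Finset.univ.filter (fun j => g j ≠ 0) with hT
      have hiT : i ∈ T := by simp [hT, hgi]
      by_cases hTn : T.card ≤ n
      · exact hgi (ih g hTn hsum i)
      -- normalize
      obtain ⟨i₀, hi₀⟩ : ∃ i₀, i₀ ∈ T := ⟨i, hiT⟩
      have hgi₀ : g i₀ ≠ 0 := by simpa [hT] using hi₀
      set h : Fin r → K := fun j => g j / g i₀ with hh
      have hhi₀ : h i₀ = 1 := by simp [hh, div_self hgi₀]
      have hsupp : ∀ j, h j ≠ 0 ↔ g j ≠ 0 := by
        intro j; simp [hh, div_eq_zero_iff, hgi₀]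
      have hsum' : (∑ j, h j • s j) = 0 := by
        have : (g i₀)⁻¹ • (∑ j, g j • s j) = 0 := by rw [hsum, smul_zero]
        rw [Finset.smul_sum] at this
        convert this using 2 with j
        rw [smul_smul]
        congr 1
        field_simp [hh]
        exact div_mul_cancel₀ (g j) hgi₀
      -- differentiate
      have hterm : ∀ j, δE (h j • s j)
          = (δ (h j) + h j * a j) • s j := by
        intro j
        rw [Algebra.smul_def, hEmul, hcomp, hseq, Algebra.smul_def, map_add, map_mul]
        ring
      have hdsum : (∑ j, (δ (h j) + h j * a j) • s j) = 0 := by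
        rw [← Finset.sum_congr rfl (fun j _ => hterm j), ← hδEsum, hsum', hδE0]
      have hasum : (∑ j, (a i₀ * h j) • s j) = 0 := by
        have : (a i₀) • (∑ j, h j • s j) = 0 := by rw [hsum', smul_zero]
        rw [Finset.smul_sum] at this
        simpa [smul_smul] using this
      set g' : Fin r → K := fun j => δ (h j) + h j * a j - a i₀ * h j with hg'
      have hg'sum : (∑ j, g' j • s j) = 0 := by
        have := sub_eq_zero_of_eq (hdsum.trans hasum.symm)
        rw [← Finset.sum_sub_distrib] at this
        convert this using 2 with j
        rw [hg', sub_smul]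
      have hg'i₀ : g' i₀ = 0 := by
        simp [hg', hhi₀, hδ1]
      have hg'zero : ∀ j, h j = 0 → g' j = 0 := by
        intro j hj; simp [hg', hj, hδ0]
      have hg'supp : (Finset.univ.filter (fun j => g' j ≠ 0)).card ≤ n := by
        have hsub : Finset.univ.filter (fun j => g' j ≠ 0) ⊆ T.erase i₀ := by
          intro j hj
          simp only [Finset.mem_filter, Finset.mem_univ, true_and] at hj
          rw [Finset.mem_erase]
          constructor
          · rintro rfl; exact hj hg'i₀
          · simp only [hT, Finset.mem_filter, Finset.mem_univ, true_and]
            intro hgz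
            exact hj (hg'zero j (by simp [hh, hgz]))
        have := Finset.card_le_card hsub
        have := Finset.card_erase_of_mem hi₀
        omega
      have hg'all : ∀ j, g' j = 0 := ih g' hg'supp hg'sum
      -- each j in support with j ≠ i₀ gives contradiction
      have honly : ∀ j, h j ≠ 0 → j = i₀ := by
        intro j hj
        have hgj := hg'all j
        have hld : a i₀ - a j = δ (h j) / h j := by
          rw [hg'] at hgj
          rw [eq_div_iff hj]
          linear_combination -hgj
        have hmemA : a i₀ - a j ∈
            Submodule.span ℚ {c : K | ∃ b : K, b ≠ 0 ∧ c = δ b / b} :=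
          Submodule.subset_span ⟨h j, hj, hld⟩
        have hmemA' : a i₀ - a j ∈ A' := sub_mem (haA' i₀) (haA' j)
        have h0 := hA' _ hmemA' hmemA
        exact (hinj (sub_eq_zero.mp h0)).symm
      -- so support of h is {i₀}, hence s i₀ = 0, contradiction
      have : (∑ j, h j • s j) = s i₀ := by
        rw [Finset.sum_eq_single i₀]
        · rw [hhi₀, one_smul]
        · intro j _ hji₀
          have : h j = 0 := by
            by_contra hc; exact hji₀ (honly j hc)
          rw [this, zero_smul]
        · simp
      exact hs0 i₀ (this ▸ hsum')
  rw [Fintype.linearIndependent_iff]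
  intro g hg i
  exact key (Finset.univ.filter (fun i => g i ≠ 0)).card g le_rfl hg i
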